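/- Let G be a finite solvable group, φ : G → H a surjective homomorphism, π a set of primes, and P a Hall π-subgroup of H. Then there exists a Hall π-subgroup Q of G such that φ(Q) = P. -/

import Mathlib

lemma myDerivedSeries_char (G : Type*) [Group G] (n : ℕ) : (derivedSeries G n).Characteristic := by
  induction n with
  | zero => exact Subgroup.topCharacteristic
  | succ n ih => exact @Subgroup.commutator_characteristic G _ _ _ ih ih

lemma exists_normal_pgroup (G : Type*) [Group G] [Finite G] [Group.IsSolvable G] [Nontrivial G] :
    ∃ p : ℕ, p.Prime ∧ ∃ N : Subgroup G, N.Normal ∧ N ≠ ⊥ ∧ IsPGroup p N := by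
  obtain ⟨m, hm⟩ := Group.IsSolvable.solvable (G := G)
  have h0 : derivedSeries G 0 ≠ ⊥ := by
    rw [derivedSeries_zero]
    simpa [derivedSeries_zero] using (Subgroup.nontrivial_iff_exists_ne_one (⊤ : Subgroup G)).symm ▸ bot_ne_top.symm
  -- find last nontrivial term
  have hex : ∃ k, derivedSeries G k = ⊥ := ⟨m, hm⟩
  classical
  set k := Nat.find hex with hkdef
  have hk : derivedSeries G k = ⊥ := Nat.find_spec hex
  have hkpos : k ≠ 0 := by
    intro h
    exact h0 (by rw [← h]; exact hk)
  obtain ⟨n, hn⟩ := Nat.exists_eq_succ_of_ne_zero hkpos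
  rw [hn] at hk
  have hA : derivedSeries G n ≠ ⊥ := Nat.find_min hex (by omega)
  set A := derivedSeries G n with hAdef
  haveI hAchar : A.Characteristic := myDerivedSeries_char G n
  have hAcomm : IsMulCommutative A := by
    rw [← Subgroup.le_centralizer_iff_isMulCommutative]
    exact Subgroup.commutator_eq_bot_iff_le_centralizer.mp (by rw [← derivedSeries_succ]; exact hk)
  haveI := hAcomm
  have hcard : 1 < Nat.card A := A.one_lt_card_iff_ne_bot.mpr hA
  set p := (Nat.card A).minFac with hp
  have hpp : p.Prime := Nat.minFac_prime (by omega)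
  haveI : Fact p.Prime := ⟨hpp⟩
  obtain ⟨P⟩ := Sylow.nonempty (p := p) (G := A)
  have hPnormal : P.1.Normal := Subgroup.normal_of_comm _
  haveI hPchar : P.1.Characteristic := Sylow.characteristic_of_normal P hPnormal
  refine ⟨p, hpp, P.1.map A.subtype, inferInstance, ?_, ?_⟩
  · have hPbot : P.1 ≠ ⊥ := P.ne_bot_of_dvd_card (Nat.minFac_dvd _)
    rw [Ne, Subgroup.map_eq_bot_iff_of_injective _ A.subtype_injective]
    exact hPbot
  · exact P.isPGroup'.map A.subtype

/-- A Hall `π`-subgroup: its order is a `π`-number and its index is a `π'`-number. -/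
def IsHallSubgroup {G : Type*} [Group G] (π : Set ℕ) (H : Subgroup G) : Prop :=
  (∀ p : ℕ, p.Prime → p ∣ Nat.card H → p ∈ π) ∧
  (∀ p : ℕ, p.Prime → p ∣ H.index → p ∉ π)

lemma hall_exists (π : Set ℕ) : ∀ (n : ℕ) (G : Type*) [Group G] [Finite G] [Group.IsSolvable G],
    Nat.card G ≤ n → ∃ Q : Subgroup G, IsHallSubgroup π Q := by
  intro n
  induction n with
  | zero =>
    intro G _ _ _ h
    have := Nat.card_pos (α := G)
    omega
  | succ n ih =>
    intro G _ _ _ hle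
    rcases subsingleton_or_nontrivial G with hs | hn
    · refine ⟨⊤, fun p hp hd => ?_, fun p hp hd => ?_⟩
      · have : Nat.card (⊤ : Subgroup G) = 1 := by
          rw [Nat.card_eq_one_iff_unique]
          exact ⟨⟨fun a b => Subtype.ext (Subsingleton.elim _ _)⟩, inferInstance⟩
        rw [this, Nat.dvd_one] at hd
        exact absurd hd hp.ne_one
      · rw [Subgroup.index_top, Nat.dvd_one] at hd
        exact absurd hd hp.ne_one
    · obtain ⟨p, hpp, N, hNnorm, hNbot, hNp⟩ := exists_normal_pgroup G
      haveI := hNnorm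
      haveI : Fact p.Prime := ⟨hpp⟩
      obtain ⟨k, hk⟩ := IsPGroup.iff_card.mp hNp
      have hNpos : 1 < Nat.card N := N.one_lt_card_iff_ne_bot.mpr hNbot
      have hGcard : Nat.card G = Nat.card (G ⧸ N) * Nat.card N :=
        Subgroup.card_eq_card_quotient_mul_card_subgroup N
      have hQlt : Nat.card (G ⧸ N) ≤ n := by
        have hqpos : 0 < Nat.card (G ⧸ N) := Nat.card_pos
        nlinarith [hle, hGcard]
      obtain ⟨Qb, hQb1, hQb2⟩ := ih (G ⧸ N) hQlt
      set K := Qb.comap (QuotientGroup.mk' N) with hKdef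
      have hNK : N ≤ K := by
        intro x hx
        simp [hKdef, Subgroup.mem_comap, QuotientGroup.mk'_apply,
          QuotientGroup.eq_one_iff, hx]
        rw [show ((x : G ⧸ N)) = 1 from (QuotientGroup.eq_one_iff x).mpr hx]
        exact Qb.one_mem
      have hKindex : K.index = Qb.index :=
        Subgroup.index_comap_of_surjective Qb (QuotientGroup.mk'_surjective N)
      have hQbpos : 0 < Qb.index := Nat.pos_of_ne_zero (Subgroup.index_ne_zero_of_finite)
      have hKcard : Nat.card K = Nat.card N * Nat.card Qb := by
        have h1 : Nat.card K * K.index = Nat.card G := Subgroup.card_mul_index K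
        have h2 : Nat.card Qb * Qb.index = Nat.card (G ⧸ N) := Subgroup.card_mul_index Qb
        rw [hKindex] at h1
        have : Nat.card K * Qb.index = (Nat.card N * Nat.card Qb) * Qb.index := by
          rw [h1, hGcard, ← h2]; ring
        exact Nat.eq_of_mul_eq_mul_right hQbpos this
      by_cases hpi : p ∈ π
      · refine ⟨K, fun q hq hd => ?_, fun q hq hd => ?_⟩
        · rw [hKcard] at hd
          rcases hq.dvd_mul.mp hd with h | h
          · rw [hk] at h
            have hq' : q = p := (Nat.prime_dvd_prime_iff_eq hq hpp).mp (hq.dvd_of_dvd_pow h)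
            rwa [hq']
          · exact hQb1 q hq h
        · rw [hKindex] at hd
          exact hQb2 q hq hd
      · -- Schur-Zassenhaus case
        set N' := N.subgroupOf K with hN'def
        haveI : N'.Normal := hNnorm.subgroupOf K
        have hN'card : Nat.card N' = Nat.card N :=
          Nat.card_congr (Subgroup.subgroupOfEquivOfLe hNK).toEquiv
        have hNpos' : 0 < Nat.card N := Nat.card_pos
        have hN'index : N'.index = Nat.card Qb := by
          have h1 : Nat.card N' * N'.index = Nat.card K := Subgroup.card_mul_index N'
          rw [hN'card, hKcard] at h1
          exact (Nat.eq_of_mul_eq_mul_left hNpos' h1)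
        have hcop : Nat.Coprime (Nat.card N') N'.index := by
          rw [hN'card, hN'index, hk]
          apply Nat.Coprime.pow_left
          rw [hpp.coprime_iff_not_dvd]
          intro hdvd
          exact hpi (hQb1 p hpp hdvd)
        obtain ⟨H', hH'⟩ := Subgroup.exists_right_complement'_of_coprime hcop
        refine ⟨H'.map K.subtype, fun q hq hd => ?_, fun q hq hd => ?_⟩
        · have hQcard : Nat.card (H'.map K.subtype) = Nat.card Qb := by
            have e : Nat.card (H'.map K.subtype) = Nat.card H' :=
              (Nat.card_congr (Subgroup.equivMapOfInjective H' K.subtype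
                K.subtype_injective).toEquiv).symm
            have h1 : Nat.card N' * Nat.card H' = Nat.card K := hH'.card_mul
            rw [hN'card, hKcard] at h1
            rw [e]
            exact Nat.eq_of_mul_eq_mul_left hNpos' h1
          rw [hQcard] at hd
          exact hQb1 q hq hd
        · have hQcard : Nat.card (H'.map K.subtype) = Nat.card Qb := by
            have e : Nat.card (H'.map K.subtype) = Nat.card H' :=
              (Nat.card_congr (Subgroup.equivMapOfInjective H' K.subtype
                K.subtype_injective).toEquiv).symm
            have h1 : Nat.card N' * Nat.card H' = Nat.card K := hH'.card_mul
            rw [hN'card, hKcard] at h1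
            rw [e]
            exact Nat.eq_of_mul_eq_mul_left hNpos' h1
          have hQbcardpos : 0 < Nat.card Qb := Nat.card_pos
          have hidx : (H'.map K.subtype).index = Nat.card N * Qb.index := by
            have h1 : Nat.card (H'.map K.subtype) * (H'.map K.subtype).index = Nat.card G :=
              Subgroup.card_mul_index _
            rw [hQcard, hGcard] at h1
            have h2 : Nat.card Qb * Qb.index = Nat.card (G ⧸ N) := Subgroup.card_mul_index Qb
            rw [← h2] at h1
            have : Nat.card Qb * (H'.map K.subtype).index
                = Nat.card Qb * (Nat.card N * Qb.index) := by rw [h1]; ring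
            exact Nat.eq_of_mul_eq_mul_left hQbcardpos this
          rw [hidx] at hd
          rcases hq.dvd_mul.mp hd with h | h
          · rw [hk] at h
            have := (Nat.prime_dvd_prime_iff_eq hq hpp).mp (hq.dvd_of_dvd_pow h)
            rwa [this]
          · exact hQb2 q hq h

theorem stmt_6 (G H : Type*) [Group G] [Group H] [Finite G] [Finite H]
    [Group.IsSolvable G] (φ : G →* H) (hφ : Function.Surjective φ)
    (π : Set ℕ) (P : Subgroup H) (hP : IsHallSubgroup π P) :
    ∃ Q : Subgroup G, IsHallSubgroup π Q ∧ Q.map φ = P := by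
  classical
  set K := P.comap φ with hKdef
  obtain ⟨R, hR1, hR2'⟩ := hall_exists π (Nat.card K) K le_rfl
  set Q := R.map K.subtype with hQdef
  have hcardQ : Nat.card Q = Nat.card R :=
    (Nat.card_congr (Subgroup.equivMapOfInjective R K.subtype K.subtype_injective).toEquiv).symm
  have hKindex : K.index = P.index := Subgroup.index_comap_of_surjective P hφ
  have hmapK : K.map φ = P := Subgroup.map_comap_eq_self_of_surjective hφ P
  have hRpos : 0 < Nat.card R := Nat.card_pos
  -- index of Q in G
  have hQindex : Q.index = R.index * P.index := by
    have h1 : Nat.card Q * Q.index = Nat.card G := Subgroup.card_mul_index Q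
    have h2 : Nat.card R * R.index = Nat.card K := Subgroup.card_mul_index R
    have h3 : Nat.card K * K.index = Nat.card G := Subgroup.card_mul_index K
    rw [hKindex] at h3
    rw [hcardQ, ← h3, ← h2] at h1
    have : Nat.card R * Q.index = Nat.card R * (R.index * P.index) := by
      rw [h1]; ring
    exact Nat.eq_of_mul_eq_mul_left hRpos this
  have hQHall : IsHallSubgroup π Q := by
    refine ⟨fun q hq hd => ?_, fun q hq hd => ?_⟩
    · rw [hcardQ] at hd
      exact hR1 q hq hd
    · rw [hQindex] at hd
      rcases hq.dvd_mul.mp hd with h | h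
      · exact hR2' q hq h
      · exact hP.2 q hq h
  refine ⟨Q, hQHall, ?_⟩
  -- M = φ(Q) ≤ P
  set M := Q.map φ with hMdef
  have hMP : M ≤ P := by
    rintro _ ⟨x, hx, rfl⟩
    obtain ⟨y, hy, rfl⟩ := hx
    exact y.2
  -- relIndex of M in P is 1
  have hMindex : M.index ∣ Q.index := by
    have hle : Q ≤ (M.comap φ) := Subgroup.le_comap_map φ Q
    have := Subgroup.index_dvd_of_le hle
    rwa [Subgroup.index_comap_of_surjective M hφ] at this
  have hrel1 : M.relIndex P ∣ M.index := by
    exact ⟨P.index, (Subgroup.relIndex_mul_index hMP).symm⟩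
  have hrel2 : M.relIndex P ∣ Nat.card P := by
    have := Subgroup.card_mul_index (M.subgroupOf P)
    exact Dvd.intro_left _ this
  have hrelpos : M.relIndex P ≠ 0 := Subgroup.index_ne_zero_of_finite
  have hrelone : M.relIndex P = 1 := by
    by_contra hne
    have hq : (M.relIndex P).minFac.Prime := Nat.minFac_prime hne
    have hdvd : (M.relIndex P).minFac ∣ M.relIndex P := Nat.minFac_dvd _
    have hin : (M.relIndex P).minFac ∈ π := hP.1 _ hq (hdvd.trans hrel2)
    have hout : (M.relIndex P).minFac ∉ π :=
      hQHall.2 _ hq ((hdvd.trans hrel1).trans hMindex)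
    exact hout hin
  exact le_antisymm hMP (Subgroup.relIndex_eq_one.mp hrelone)
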